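/- arXiv:2003.07059 — 3 statements merged into one kernel-verified Lean document; each statement's English description precedes it below -/
import Mathlib

section
/- Let k_0 = -3, k_{2n-1} = -3^n - 3 and k_{2n} = 3^{n+1} - 9 for n ≥ 1, and let a_n = ∑_{j=0}^{n-1}(k_j + 6). Then a_{2n-1} = 3^n and a_{2n} = 3 for all n ≥ 1; consequently ∑_{n=1}^∞ 1/a_n = ∞ while ∑_{n=1}^∞ 1/(a_n + a_{n+1}) < ∞. -/
/-- For the sequence `k₀ = -3`, `k_{2n-1} = -3^n - 3`, `k_{2n} = 3^{n+1} - 9`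
(for `n ≥ 1`) with partial sums `a n = ∑_{j=0}^{n-1} (k j + 6)`, one has
`a (2n-1) = 3^n` and `a (2n) = 3` for all `n ≥ 1`; consequently
`∑ 1 / a n = ∞` while `∑ 1 / (a n + a (n+1)) < ∞`. -/
theorem stmt_3 (k : ℕ → ℤ) (hk0 : k 0 = -3)
    (hodd : ∀ n ≥ 1, k (2 * n - 1) = -3 ^ n - 3)
    (heven : ∀ n ≥ 1, k (2 * n) = 3 ^ (n + 1) - 9)
    (a : ℕ → ℝ) (ha : ∀ n, a n = ∑ j ∈ Finset.range n, ((k j : ℝ) + 6)) :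
    (∀ n ≥ 1, a (2 * n - 1) = 3 ^ n ∧ a (2 * n) = 3) ∧
      ¬ Summable (fun n : ℕ => 1 / a (n + 1)) ∧
      Summable (fun n : ℕ => 1 / (a (n + 1) + a (n + 2))) := by
  have hstep : ∀ n, a (n + 1) = a n + ((k n : ℝ) + 6) := by
    intro n
    rw [ha, ha, Finset.sum_range_succ]
  have key : ∀ n, 1 ≤ n → a (2 * n - 1) = 3 ^ n ∧ a (2 * n) = 3 := by
    intro n hn
    induction n with
    | zero => omega
    | succ m ih =>
      rcases Nat.eq_or_lt_of_le hn with h1 | h1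
      · -- m + 1 = 1, i.e. m = 0
        have hm : m = 0 := by omega
        subst hm
        have h1' : a 1 = 3 := by
          have h := hstep 0
          rw [ha 0, Finset.sum_range_zero, hk0] at h
          norm_num at h
          simpa using h
        constructor
        · simpa using h1'
        · have hk1 : k 1 = -6 := by
            have := hodd 1 le_rfl
            norm_num at this
            simpa using this
          have : a 2 = a 1 + ((k 1 : ℝ) + 6) := hstep 1
          rw [this, h1', hk1]; norm_num
      · have hm : 1 ≤ m := by omega
        obtain ⟨ho, he⟩ := ih hm
        have hko : k (2 * m) = 3 ^ (m + 1) - 9 := heven m hm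
        have hke : k (2 * (m + 1) - 1) = -3 ^ (m + 1) - 3 := hodd (m + 1) (by omega)
        have e1 : a (2 * m + 1) = a (2 * m) + ((k (2 * m) : ℝ) + 6) := hstep _
        have hoddval : a (2 * (m + 1) - 1) = 3 ^ (m + 1) := by
          have : 2 * (m + 1) - 1 = 2 * m + 1 := by omega
          rw [this, e1, he, hko]
          push_cast
          ring
        refine ⟨hoddval, ?_⟩
        have e2 : a (2 * (m + 1)) = a (2 * (m + 1) - 1) + ((k (2 * (m + 1) - 1) : ℝ) + 6) := by
          have h2 : 2 * (m + 1) = (2 * (m + 1) - 1) + 1 := by omega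
          rw [h2]; exact hstep _
        rw [e2, hoddval, hke]
        push_cast
        ring
  refine ⟨key, ?_, ?_⟩
  · intro hs
    have h0 := hs.tendsto_atTop_zero
    have hmono : Filter.Tendsto (fun n : ℕ => 2 * n + 1) Filter.atTop Filter.atTop := by
      apply Filter.tendsto_atTop_atTop_of_monotone (fun x y h => by omega)
      intro b; exact ⟨b, by omega⟩
    have h1 : Filter.Tendsto (fun n : ℕ => 1 / a (2 * n + 1 + 1)) Filter.atTop (nhds 0) :=
      h0.comp hmono
    have h2 : ∀ n : ℕ, 1 / a (2 * n + 1 + 1) = 1 / 3 := by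
      intro n
      have := (key (n + 1) (by omega)).2
      have h3 : 2 * (n + 1) = 2 * n + 1 + 1 := by omega
      rw [h3] at this
      rw [this]
    rw [funext h2] at h1
    have := tendsto_nhds_unique h1 tendsto_const_nhds
    norm_num at this
  · apply Summable.even_add_odd
    · -- f (2k) = 1/(a(2k+1) + a(2k+2)), a(2k+1) = 3^(k+1), a(2k+2) = 3
      refine Summable.of_nonneg_of_le (f := fun kk : ℕ => (1/3 : ℝ) ^ kk) ?_ ?_ ?_
      · intro kk
        obtain ⟨ho, he⟩ := key (kk + 1) (by omega)
        have h1 : 2 * (kk + 1) - 1 = 2 * kk + 1 := by omega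
        have h2 : 2 * (kk + 1) = 2 * kk + 2 := by omega
        rw [h1] at ho; rw [h2] at he
        rw [ho, he]
        positivity
      · intro kk
        obtain ⟨ho, he⟩ := key (kk + 1) (by omega)
        have h1 : 2 * (kk + 1) - 1 = 2 * kk + 1 := by omega
        have h2 : 2 * (kk + 1) = 2 * kk + 2 := by omega
        rw [h1] at ho; rw [h2] at he
        rw [ho, he]
        rw [div_pow, one_pow, div_le_div_iff₀ (by positivity) (by positivity)]
        have : (3:ℝ)^kk * 3 ≤ 3 ^ (kk+1) := by rw [pow_succ]
        nlinarith [pow_pos (by norm_num : (0:ℝ) < 3) kk]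
      · exact summable_geometric_of_lt_one (by norm_num) (by norm_num)
    · -- f (2k+1) = 1/(a(2k+2) + a(2k+3)), a(2k+2) = 3, a(2k+3) = 3^(k+2)
      refine Summable.of_nonneg_of_le (f := fun kk : ℕ => (1/3 : ℝ) ^ kk) ?_ ?_ ?_
      · intro kk
        obtain ⟨_, he⟩ := key (kk + 1) (by omega)
        obtain ⟨ho, _⟩ := key (kk + 2) (by omega)
        have h1 : 2 * (kk + 2) - 1 = 2 * kk + 1 + 2 := by omega
        have h2 : 2 * (kk + 1) = 2 * kk + 1 + 1 := by omega
        rw [h1] at ho; rw [h2] at he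
        rw [ho, he]
        positivity
      · intro kk
        obtain ⟨_, he⟩ := key (kk + 1) (by omega)
        obtain ⟨ho, _⟩ := key (kk + 2) (by omega)
        have h1 : 2 * (kk + 2) - 1 = 2 * kk + 1 + 2 := by omega
        have h2 : 2 * (kk + 1) = 2 * kk + 1 + 1 := by omega
        rw [h1] at ho; rw [h2] at he
        rw [ho, he]
        rw [div_pow, one_pow, div_le_div_iff₀ (by positivity) (by positivity)]
        have h3 : (3:ℝ)^kk * 3 ≤ 3 ^ (kk+2) := by
          rw [pow_succ, pow_succ]
          nlinarith [pow_pos (by norm_num : (0:ℝ) < 3) kk]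
        nlinarith [pow_pos (by norm_num : (0:ℝ) < 3) kk, pow_pos (by norm_num : (0:ℝ) < 3) (kk+2)]
      · exact summable_geometric_of_lt_one (by norm_num) (by norm_num)
end

section
/- Let h_n ≥ 1, d_n ≥ 1, and c_n be defined by c_1 = h_1 and c_n = c_{n-1} + h_n(1 + ∑_{k=1}^{n-1} d_k c_k). Then for n ≥ 3 one can write c_n = (1 + α_n)·h_n·d_{n-1}·c_{n-1} where 0 ≤ α_n ≤ 1/h_n + 1/h_{n-1}. Consequently, if ∑_{n=1}^∞ 1/h_n < ∞, then there is a constant β > 0 with d_n·c_n ≤ β·∏_{k=1}^{n} d_k·h_k for all n. -/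
/-- With `h n ≥ 1`, `d n ≥ 1`, `c 1 = h 1` and
`c n = c (n-1) + h n * (1 + ∑_{k=1}^{n-1} d k * c k)` for `n ≥ 2`, for every
`n ≥ 3` one can write `c n = (1 + α) * h n * d (n-1) * c (n-1)` with
`0 ≤ α ≤ 1 / h n + 1 / h (n-1)`; consequently, if `∑ 1 / h n < ∞`, then there
is `β > 0` with `d n * c n ≤ β * ∏_{k=1}^n d k * h k` for all `n ≥ 1`. -/
theorem stmt_7 (h d c : ℕ → ℝ) (hh : ∀ n ≥ 1, 1 ≤ h n) (hd : ∀ n ≥ 1, 1 ≤ d n)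
    (hc1 : c 1 = h 1)
    (hrec : ∀ n ≥ 2, c n = c (n - 1) + h n * (1 + ∑ k ∈ Finset.Icc 1 (n - 1), d k * c k)) :
    (∀ n ≥ 3, ∃ α : ℝ, c n = (1 + α) * (h n * (d (n - 1) * c (n - 1))) ∧
        0 ≤ α ∧ α ≤ 1 / h n + 1 / h (n - 1)) ∧
      (Summable (fun n : ℕ => 1 / h (n + 1)) →
        ∃ β > 0, ∀ n ≥ 1, d n * c n ≤ β * ∏ k ∈ Finset.Icc 1 n, d k * h k) := by
  -- positivity of c
  have hcpos : ∀ n, 1 ≤ n → 0 < c n := by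
    intro n
    induction n using Nat.strong_induction_on with
    | _ n ih =>
      intro hn
      rcases eq_or_lt_of_le hn with h1 | h2
      · rw [← h1, hc1]; linarith [hh 1 le_rfl]
      · have h2' : 2 ≤ n := h2
        rw [hrec n h2']
        have hS : 0 ≤ ∑ k ∈ Finset.Icc 1 (n-1), d k * c k := by
          apply Finset.sum_nonneg
          intro k hk
          simp only [Finset.mem_Icc] at hk
          have hk1 : 1 ≤ k := hk.1
          have : k < n := by omega
          exact le_of_lt (mul_pos (lt_of_lt_of_le one_pos (hd k hk1)) (ih k this hk1))
        have hc' := ih (n-1) (by omega) (by omega)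
        have hhn := hh n (by omega)
        nlinarith
  -- Part one
  have A : ∀ n ≥ 3, ∃ α : ℝ, c n = (1 + α) * (h n * (d (n - 1) * c (n - 1))) ∧
      0 ≤ α ∧ α ≤ 1 / h n + 1 / h (n - 1) := by
    intro n hn
    obtain ⟨m, rfl⟩ : ∃ m, n = m + 3 := ⟨n - 3, by omega⟩
    have ha : 1 ≤ h (m+3) := hh _ (by omega)
    have hb : 1 ≤ h (m+2) := hh _ (by omega)
    have hD : 1 ≤ d (m+2) := hd _ (by omega)
    have hx : 0 < c (m+2) := hcpos _ (by omega)
    have hy : 0 < c (m+1) := hcpos _ (by omega)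
    have hrn := hrec (m+3) (by omega)
    have hrn1 := hrec (m+2) (by omega)
    simp only [show m+3-1 = m+2 from rfl, show m+2-1 = m+1 from rfl] at hrn hrn1 ⊢
    -- split the sum in hrn
    rw [show m+2 = (m+1)+1 from rfl, Finset.sum_Icc_succ_top (by omega : 1 ≤ m+1+1)] at hrn
    simp only [show m+1+1 = m+2 from rfl] at hrn
    set S := ∑ k ∈ Finset.Icc 1 (m+1), d k * c k with hSdef
    have hS0 : 0 ≤ S := by
      apply Finset.sum_nonneg
      intro k hk
      simp only [Finset.mem_Icc] at hk
      exact le_of_lt (mul_pos (lt_of_lt_of_le one_pos (hd k hk.1)) (hcpos k hk.1))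
    set P := h (m+3) * (d (m+2) * c (m+2)) with hPdef
    have hPpos : 0 < P := by
      apply mul_pos (by linarith) (mul_pos (by linarith) hx)
    refine ⟨c (m+3) / P - 1, ?_, ?_, ?_⟩
    · field_simp; ring
    · -- lower bound : P ≤ c (m+3)
      have hlow : P ≤ c (m+3) := by
        rw [hrn, hPdef]; nlinarith
      have : 1 ≤ c (m+3) / P := (one_le_div hPpos).2 hlow
      linarith
    · -- upper bound
      have hb1S : h (m+2) * (1 + S) = c (m+2) - c (m+1) := by linarith
      have e2 : h (m+3)^2 * (h (m+2) * (1 + S)) = h (m+3)^2 * (c (m+2) - c (m+1)) := by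
        rw [hb1S]
      have ha0 : (0:ℝ) < h (m+3) := by linarith
      have hb0 : (0:ℝ) < h (m+2) := by linarith
      have key : c (m+3) * (h (m+3) * h (m+2)) ≤
          P * (h (m+3) * h (m+2) + h (m+2) + h (m+3)) := by
        rw [hrn, hPdef]
        nlinarith [e2,
          mul_nonneg (mul_nonneg (mul_nonneg ha0.le hb0.le) hx.le) (sub_nonneg.2 hD),
          mul_nonneg (mul_nonneg (mul_nonneg ha0.le ha0.le) hx.le) (sub_nonneg.2 hD),
          mul_nonneg (mul_nonneg ha0.le ha0.le) hy.le]
      have hab : (0:ℝ) < h (m+3) * h (m+2) := by nlinarith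
      have h1 : c (m+3) / P ≤ (h (m+3) * h (m+2) + h (m+2) + h (m+3)) / (h (m+3) * h (m+2)) := by
        rw [div_le_div_iff₀ hPpos hab]
        linarith [key]
      have h2 : (h (m+3) * h (m+2) + h (m+2) + h (m+3)) / (h (m+3) * h (m+2)) =
          1 + (1 / h (m+3) + 1 / h (m+2)) := by
        field_simp
        ring
      rw [h2] at h1
      linarith
  refine ⟨A, ?_⟩
  -- Part two
  intro hsum
  set T := ∑' m : ℕ, 1 / h (m+1) with hT
  have hterm : ∀ m : ℕ, 0 ≤ 1 / h (m+1) := by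
    intro m
    exact one_div_nonneg.2 (by linarith [hh (m+1) (by omega)])
  have hT0 : 0 ≤ T := tsum_nonneg hterm
  -- any finite sum of 1/h over indices ≥ 1 is ≤ T
  have hfin : ∀ s : Finset ℕ, (∀ k ∈ s, 1 ≤ k) → ∑ k ∈ s, 1 / h k ≤ T := by
    intro s hs
    have e : ∑ m ∈ s.image (· - 1), 1 / h (m+1) = ∑ k ∈ s, 1 / h k := by
      rw [Finset.sum_image (by intro x hx y hy hxy; have := hs x hx; have := hs y hy; simp only at hxy; omega)]
      apply Finset.sum_congr rfl
      intro k hk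
      have hk1 : k - 1 + 1 = k := by have := hs k hk; omega
      rw [hk1]
    rw [← e]
    exact Summable.sum_le_tsum _ (fun i _ => hterm i) hsum
  -- positivity of the products
  have hppos : ∀ n, 0 < ∏ k ∈ Finset.Icc 1 n, d k * h k := by
    intro n
    apply Finset.prod_pos
    intro k hk
    simp only [Finset.mem_Icc] at hk
    exact mul_pos (by linarith [hd k hk.1]) (by linarith [hh k hk.1])
  set C : ℝ := (d 2 * c 2) / (∏ k ∈ Finset.Icc 1 2, d k * h k) with hC
  have hC0 : 0 < C := div_pos (mul_pos (by linarith [hd 2 one_le_two]) (hcpos 2 one_le_two)) (hppos 2)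
  -- main induction
  have main : ∀ n, 2 ≤ n → d n * c n ≤
      C * Real.exp (∑ k ∈ Finset.Icc 2 n, (1 / h k + 1 / h (k-1))) *
        ∏ k ∈ Finset.Icc 1 n, d k * h k := by
    intro n hn
    induction n, hn using Nat.le_induction with
    | base =>
      have hP2 := hppos 2
      have e : C * Real.exp (∑ k ∈ Finset.Icc 2 2, (1 / h k + 1 / h (k-1))) *
          ∏ k ∈ Finset.Icc 1 2, d k * h k
          = (d 2 * c 2) * Real.exp (∑ k ∈ Finset.Icc 2 2, (1 / h k + 1 / h (k-1))) := by
        rw [hC]; field_simp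
      rw [e]
      have hs0 : 0 ≤ ∑ k ∈ Finset.Icc 2 2, (1 / h k + 1 / h (k-1)) := by
        apply Finset.sum_nonneg
        intro k hk
        simp only [Finset.mem_Icc] at hk
        exact add_nonneg (one_div_nonneg.2 (by linarith [hh k (by omega)]))
          (one_div_nonneg.2 (by linarith [hh (k-1) (by omega : 1 ≤ k - 1)]))
      have := Real.one_le_exp hs0
      nlinarith [mul_pos (lt_of_lt_of_le one_pos (hd 2 one_le_two)) (hcpos 2 one_le_two)]
    | succ n hn ih =>
      obtain ⟨α, hα, hα0, hαle⟩ := A (n+1) (by omega)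
      simp only [Nat.add_sub_cancel] at hα hαle
      have hdn1 : 1 ≤ d (n+1) := hd _ (by omega)
      have hhn1 : 1 ≤ h (n+1) := hh _ (by omega)
      have hdh : (0:ℝ) < d (n+1) * h (n+1) := by nlinarith
      have hgn : 0 ≤ d n * c n :=
        le_of_lt (mul_pos (by linarith [hd n (by omega : 1 ≤ n)]) (hcpos n (by omega)))
      set t := 1 / h (n+1) + 1 / h n with ht
      have h1 : 1 + α ≤ Real.exp t := by
        have := Real.add_one_le_exp t
        linarith
      have step1 : (1 + α) * ((d (n+1) * h (n+1)) * (d n * c n)) ≤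
          Real.exp t * ((d (n+1) * h (n+1)) *
            (C * Real.exp (∑ k ∈ Finset.Icc 2 n, (1 / h k + 1 / h (k-1))) *
              ∏ k ∈ Finset.Icc 1 n, d k * h k)) := by
        apply mul_le_mul h1 (mul_le_mul_of_nonneg_left ih hdh.le)
          (mul_nonneg hdh.le hgn) (Real.exp_pos t).le
      have eL : d (n+1) * c (n+1) = (1 + α) * ((d (n+1) * h (n+1)) * (d n * c n)) := by
        rw [hα]; ring
      have eS : ∑ k ∈ Finset.Icc 2 (n+1), (1 / h k + 1 / h (k-1))
          = (∑ k ∈ Finset.Icc 2 n, (1 / h k + 1 / h (k-1))) + t := by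
        rw [Finset.sum_Icc_succ_top (by omega : 2 ≤ n+1)]
        simp [ht, Nat.add_sub_cancel]
      have eP : ∏ k ∈ Finset.Icc 1 (n+1), d k * h k
          = (∏ k ∈ Finset.Icc 1 n, d k * h k) * (d (n+1) * h (n+1)) := by
        rw [Finset.prod_Icc_succ_top (by omega : 1 ≤ n+1)]
      rw [eL, eS, eP, Real.exp_add]
      calc (1 + α) * ((d (n+1) * h (n+1)) * (d n * c n))
          ≤ Real.exp t * ((d (n+1) * h (n+1)) *
            (C * Real.exp (∑ k ∈ Finset.Icc 2 n, (1 / h k + 1 / h (k-1))) *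
              ∏ k ∈ Finset.Icc 1 n, d k * h k)) := step1
        _ = C * (Real.exp (∑ k ∈ Finset.Icc 2 n, (1 / h k + 1 / h (k-1))) * Real.exp t) *
            ((∏ k ∈ Finset.Icc 1 n, d k * h k) * (d (n+1) * h (n+1))) := by ring
  -- the sums are bounded by 2T
  have hSbound : ∀ n, 2 ≤ n → ∑ k ∈ Finset.Icc 2 n, (1 / h k + 1 / h (k-1)) ≤ 2 * T := by
    intro n hn
    rw [Finset.sum_add_distrib]
    have b1 : ∑ k ∈ Finset.Icc 2 n, 1 / h k ≤ T := by
      apply hfin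
      intro k hk
      simp only [Finset.mem_Icc] at hk
      omega
    have b2 : ∑ k ∈ Finset.Icc 2 n, 1 / h (k-1) ≤ T := by
      have e : ∑ k ∈ Finset.Icc 2 n, 1 / h (k-1)
          = ∑ j ∈ Finset.Icc 1 (n-1), 1 / h j := by
        have : Finset.Icc 2 n = Finset.map (addRightEmbedding 1) (Finset.Icc 1 (n-1)) := by
          rw [Finset.map_add_right_Icc]
          congr 1
          omega
        rw [this, Finset.sum_map]
        apply Finset.sum_congr rfl
        intro j hj
        simp [addRightEmbedding]
      rw [e]
      apply hfin
      intro k hk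
      simp only [Finset.mem_Icc] at hk
      omega
    linarith
  refine ⟨max 1 (C * Real.exp (2 * T)), lt_of_lt_of_le one_pos (le_max_left _ _), ?_⟩
  intro n hn
  rcases eq_or_lt_of_le hn with h1 | h2
  · -- n = 1
    rw [← h1]
    simp only [Finset.Icc_self, Finset.prod_singleton]
    have hpos : 0 < d 1 * h 1 := mul_pos (by linarith [hd 1 le_rfl]) (by linarith [hh 1 le_rfl])
    have : d 1 * c 1 = d 1 * h 1 := by rw [hc1]
    rw [this]
    nlinarith [le_max_left (1:ℝ) (C * Real.exp (2 * T))]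
  · -- n ≥ 2
    have hn2 : 2 ≤ n := h2
    have := main n hn2
    have hE : Real.exp (∑ k ∈ Finset.Icc 2 n, (1 / h k + 1 / h (k-1))) ≤ Real.exp (2 * T) :=
      Real.exp_le_exp.2 (hSbound n hn2)
    have hPn := hppos n
    have h3 : C * Real.exp (∑ k ∈ Finset.Icc 2 n, (1 / h k + 1 / h (k-1))) *
        ∏ k ∈ Finset.Icc 1 n, d k * h k ≤ C * Real.exp (2 * T) * ∏ k ∈ Finset.Icc 1 n, d k * h k := by
      apply mul_le_mul_of_nonneg_right _ hPn.le
      exact mul_le_mul_of_nonneg_left hE hC0.le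
    have h4 : C * Real.exp (2 * T) * ∏ k ∈ Finset.Icc 1 n, d k * h k ≤
        max 1 (C * Real.exp (2 * T)) * ∏ k ∈ Finset.Icc 1 n, d k * h k :=
      mul_le_mul_of_nonneg_right (le_max_right _ _) hPn.le
    linarith
end

section
/- Let h_n be positive integers with h_n = 2 for n ∉ {n_k} and suppose along the subsequence, (log h_{n_k})/∏_{j=1}^{n_k−1} h_j ∈ [1/k, 2/k] and k·∏_{j=1}^{n_k−1} h_j ≤ c_{n_k−1} where c_n ≥ ∏_{j=1}^n h_j ≥ 2^n. Then ∑_{n=2}^∞ (log h_n)/c_{n-1} ≤ ∑_{n=1}^∞ (log 2)/2^{n-1} + ∑_{k=1}^∞ 2/k² < ∞, while ∑_{n=2}^∞ (log h_n)/∏_{j=1}^{n-1} h_j ≥ ∑_{k=1}^∞ 1/k = ∞. -/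
/-- With `h n = 2` off a strictly increasing subsequence `(n k)`, along which
`1/k ≤ log (h (n k)) / ∏_{j<n k} h j ≤ 2/k` and
`c (n k - 1) ≥ k * ∏_{j<n k} h j`, where `c n ≥ ∏_{j=1}^n h j`, the series
`∑_{n≥2} log (h n) / c (n-1)` converges while
`∑_{n≥2} log (h n) / ∏_{j=1}^{n-1} h j` diverges. -/
theorem stmt_18 (nk : ℕ → ℕ) (hmono : StrictMono nk) (hnk1 : ∀ k ≥ 1, 1 ≤ nk k)
    (h : ℕ → ℕ) (hh : ∀ n ≥ 1, 1 ≤ h n)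
    (hh2 : ∀ n ≥ 1, (∀ k ≥ 1, n ≠ nk k) → h n = 2)
    (c : ℕ → ℝ) (hc : ∀ n ≥ 1, (∏ j ∈ Finset.Icc 1 n, (h j : ℝ)) ≤ c n)
    (hcpos : ∀ n ≥ 1, 0 < c n)
    (hlow : ∀ k : ℕ, 1 ≤ k → 1 / (k : ℝ) ≤
      Real.log (h (nk k)) / ∏ j ∈ Finset.Icc 1 (nk k - 1), (h j : ℝ))
    (hup : ∀ k : ℕ, 1 ≤ k → Real.log (h (nk k)) / (∏ j ∈ Finset.Icc 1 (nk k - 1), (h j : ℝ)) ≤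
      2 / (k : ℝ))
    (hck : ∀ k : ℕ, 1 ≤ k → (k : ℝ) * ∏ j ∈ Finset.Icc 1 (nk k - 1), (h j : ℝ) ≤ c (nk k - 1)) :
    Summable (fun n : ℕ => Real.log (h (n + 2)) / c (n + 1)) ∧
      ¬ Summable (fun n : ℕ => Real.log (h (n + 2)) / ∏ j ∈ Finset.Icc 1 (n + 1), (h j : ℝ)) := by
  classical
  set P : ℕ → ℝ := fun n => ∏ j ∈ Finset.Icc 1 n, (h j : ℝ) with hPdef
  have hPpos : ∀ n, 0 < P n := by
    intro n
    apply Finset.prod_pos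
    intro j hj
    have := hh j (Finset.mem_Icc.mp hj).1
    positivity
  have hlog_nonneg : ∀ n ≥ 1, 0 ≤ Real.log (h n) := by
    intro n hn
    apply Real.log_nonneg
    exact_mod_cast hh n hn
  -- every h n (n ≥ 1) is at least 2
  have hh2' : ∀ n ≥ 1, 2 ≤ h n := by
    intro n hn
    by_cases hex : ∀ k ≥ 1, n ≠ nk k
    · exact (hh2 n hn hex).ge
    · push_neg at hex
      obtain ⟨k, hk1, hkeq⟩ := hex
      have hP' := hPpos (nk k - 1)
      have h1 : (0:ℝ) < 1 / (k:ℝ) := by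
        have : (0:ℝ) < (k:ℝ) := by exact_mod_cast hk1
        positivity
      have h2 := hlow k hk1
      have hlogpos : 0 < Real.log (h (nk k)) := by
        by_contra hcon
        push_neg at hcon
        have : Real.log (h (nk k)) / P (nk k - 1) ≤ 0 :=
          div_nonpos_of_nonpos_of_nonneg hcon hP'.le
        simp only [hPdef] at this h2
        linarith
      have hgt1 : (1:ℝ) < (h (nk k) : ℝ) := by
        by_contra hcon
        push_neg at hcon
        have := Real.log_nonpos (by positivity) hcon
        linarith
      have : 1 < h (nk k) := by exact_mod_cast hgt1
      rw [hkeq]; omega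
  -- products grow at least geometrically
  have hPge : ∀ n, (2:ℝ)^n ≤ P n := by
    intro n
    have : (2:ℝ)^n = ∏ j ∈ Finset.Icc 1 n, (2:ℝ) := by
      rw [Finset.prod_const, Nat.card_Icc]; norm_num
    rw [this]
    apply Finset.prod_le_prod (fun j _ => by norm_num)
    intro j hj
    exact_mod_cast hh2' j (Finset.mem_Icc.mp hj).1
  have hcge : ∀ n ≥ 1, (2:ℝ)^n ≤ c n := fun n hn => (hPge n).trans (hc n hn)
  constructor
  · -- convergence
    set f : ℕ → ℝ := fun n => Real.log (h (n + 2)) / c (n + 1) with hfdef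
    have hfnn : ∀ n, 0 ≤ f n := fun n =>
      div_nonneg (hlog_nonneg _ (by omega)) (hcpos (n+1) (by omega)).le
    set g : ℕ → ℝ := fun m => 2 / (m:ℝ)^2 with hgdef
    have hgnn : ∀ m, 0 ≤ g m := fun m => by positivity
    have hgsum : Summable g := by
      have h1 : Summable (fun m : ℕ => 1/(m:ℝ)^2) := Real.summable_one_div_nat_pow.mpr one_lt_two
      have := h1.mul_left 2
      refine this.congr (fun m => ?_)
      rw [mul_one_div, hgdef]
    set g1 : ℕ → ℝ := fun n => Real.log 2 * (1/2:ℝ)^(n+1) with hg1def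
    have hg1nn : ∀ n, 0 ≤ g1 n := fun n => by
      have := Real.log_nonneg (by norm_num : (1:ℝ) ≤ 2)
      positivity
    have hg1sum : Summable g1 := by
      have h1 : Summable (fun n : ℕ => (1/2:ℝ)^n * ((1/2) * Real.log 2)) :=
        summable_geometric_two.mul_right _
      apply h1.congr
      intro n
      simp only [hg1def, pow_succ]
      ring
    set K : ℕ → ℕ := fun n => if hp : ∃ k, 1 ≤ k ∧ nk k = n + 2 then hp.choose else 0 with hKdef
    have hKspec : ∀ n, (∃ k, 1 ≤ k ∧ nk k = n + 2) → 1 ≤ K n ∧ nk (K n) = n + 2 := by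
      intro n hp
      simp only [hKdef, dif_pos hp]
      exact hp.choose_spec
    apply summable_of_sum_range_le hfnn (c := (∑' m, g m) + ∑' n, g1 n)
    intro N
    rw [← Finset.sum_filter_add_sum_filter_not (Finset.range N)
      (fun n => ∃ k, 1 ≤ k ∧ nk k = n + 2) f]
    apply add_le_add
    · -- indices on the subsequence
      calc ∑ n ∈ (Finset.range N).filter (fun n => ∃ k, 1 ≤ k ∧ nk k = n + 2), f n
          ≤ ∑ n ∈ (Finset.range N).filter (fun n => ∃ k, 1 ≤ k ∧ nk k = n + 2), g (K n) := by
            apply Finset.sum_le_sum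
            intro n hn
            obtain ⟨hk1, hkeq⟩ := hKspec n (Finset.mem_filter.mp hn).2
            set k := K n
            have hkpos : (0:ℝ) < (k:ℝ) := by exact_mod_cast hk1
            have hn1 : n + 1 = nk k - 1 := by omega
            have hPp := hPpos (nk k - 1)
            have hkP : (0:ℝ) < (k:ℝ) * P (nk k - 1) := by positivity
            have hlognn : 0 ≤ Real.log (h (nk k)) :=
              hlog_nonneg _ (by have := hnk1 k hk1; omega)
            have step1 : f n ≤ Real.log (h (nk k)) / ((k:ℝ) * P (nk k - 1)) := by
              simp only [hfdef, hn1, ← hkeq]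
              exact div_le_div_of_nonneg_left hlognn hkP (hck k hk1)
            have step2 : Real.log (h (nk k)) / ((k:ℝ) * P (nk k - 1))
                = (Real.log (h (nk k)) / P (nk k - 1)) / (k:ℝ) := by
              rw [div_div, mul_comm]
            have step3 : (Real.log (h (nk k)) / P (nk k - 1)) / (k:ℝ) ≤ (2 / (k:ℝ)) / (k:ℝ) := by
              exact div_le_div_of_nonneg_right (hup k hk1) hkpos.le
            have step4 : (2 / (k:ℝ)) / (k:ℝ) = g k := by
              simp only [hgdef]
              rw [div_div, ← sq]
            calc f n ≤ _ := step1
              _ = _ := step2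
              _ ≤ _ := step3
              _ = g k := step4
        _ = ∑ m ∈ ((Finset.range N).filter (fun n => ∃ k, 1 ≤ k ∧ nk k = n + 2)).image K,
              g m := by
            rw [Finset.sum_image]
            intro x hx y hy hxy
            obtain ⟨_, hx2⟩ := hKspec x (Finset.mem_filter.mp hx).2
            obtain ⟨_, hy2⟩ := hKspec y (Finset.mem_filter.mp hy).2
            rw [hxy] at hx2
            omega
        _ ≤ ∑' m, g m := Summable.sum_le_tsum _ (fun m _ => hgnn m) hgsum
    · -- indices off the subsequence
      calc ∑ n ∈ (Finset.range N).filter (fun n => ¬∃ k, 1 ≤ k ∧ nk k = n + 2), f n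
          ≤ ∑ n ∈ (Finset.range N).filter (fun n => ¬∃ k, 1 ≤ k ∧ nk k = n + 2), g1 n := by
            apply Finset.sum_le_sum
            intro n hn
            have hnp := (Finset.mem_filter.mp hn).2
            push_neg at hnp
            have hne : ∀ k ≥ 1, n + 2 ≠ nk k := by
              intro k hk
              exact fun hcon => (hnp k hk) hcon.symm
            have h2 : h (n + 2) = 2 := hh2 (n+2) (by omega) hne
            have hp2 : (0:ℝ) < 2^(n+1) := by positivity
            have hlognn : (0:ℝ) ≤ Real.log 2 := Real.log_nonneg (by norm_num)
            have : f n ≤ Real.log 2 / (2:ℝ)^(n+1) := by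
              simp only [hfdef, h2]
              norm_num
              exact div_le_div_of_nonneg_left hlognn hp2 (hcge (n+1) (by omega))
            refine this.trans_eq ?_
            simp only [hg1def]
            rw [one_div, inv_pow, ← div_eq_mul_inv]
        _ ≤ ∑' n, g1 n := Summable.sum_le_tsum _ (fun n _ => hg1nn n) hg1sum
  · -- divergence
    intro hsum
    set j : ℕ → ℕ := fun k => nk (k + 2) - 2 with hjdef
    have hnk2 : ∀ k, 2 ≤ nk (k + 2) := by
      intro k
      have h1 := hnk1 1 le_rfl
      have h2 : nk 1 < nk (k+2) := hmono (by omega)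
      omega
    have hjinj : Function.Injective j := by
      intro a b hab
      simp only [hjdef] at hab
      have ha := hnk2 a
      have hb := hnk2 b
      have : nk (a+2) = nk (b+2) := by omega
      have := hmono.injective this
      omega
    have hcomp := hsum.comp_injective hjinj
    have hge : ∀ k : ℕ, 1 / ((k:ℝ) + 2) ≤
        (fun n : ℕ => Real.log (h (n + 2)) / ∏ j ∈ Finset.Icc 1 (n + 1), (h j : ℝ)) (j k) := by
      intro k
      have h2 := hnk2 k
      have : j k + 2 = nk (k + 2) := by simp only [hjdef]; omega
      have h1 : j k + 1 = nk (k + 2) - 1 := by simp only [hjdef]; omega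
      simp only [this, h1]
      have := hlow (k + 2) (by omega)
      have hcast : ((k + 2 : ℕ) : ℝ) = (k:ℝ) + 2 := by push_cast; ring
      rw [hcast] at this
      exact this
    have hsum2 : Summable (fun k : ℕ => 1 / ((k:ℝ) + 2)) := by
      apply Summable.of_nonneg_of_le (fun k => by positivity) hge hcomp
    have : Summable (fun k : ℕ => 1 / ((k + 2 : ℕ) : ℝ)) := by
      apply hsum2.congr
      intro k
      push_cast
      ring
    have := (summable_nat_add_iff (f := fun n : ℕ => 1 / (n:ℝ)) 2).mp this
    exact Real.not_summable_one_div_natCast this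
end
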